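/- Let m be a finite Borel measure on ℝⁿ supported in a closed nonempty set S, let {Q_κ}_{κ∈I} be a Whitney decomposition of ℝⁿ \ S with metric projections x̃_κ, and let 𝓘 = {κ ∈ I : r_κ ≤ 1}. Then for every c ≥ 1, Σ_{κ∈𝓘} L_n(Q(x̃_κ, r_κ)) · m(Q(x̃_κ, c)) ≤ C(c,n) · m(S), where the constant C depends only on c and n. -/

import Mathlib

open Metric Set MeasureTheory
open scoped ENNReal NNReal

/-- Let `m` be a finite Borel measure on `ℝⁿ` supported in a closed
nonempty set `S`, let `{Q_κ}_{κ ∈ I}` be a Whitney decomposition of `ℝⁿ \ S` (closed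
sup-norm cubes with disjoint interiors contained in `Sᶜ` and satisfying
`diam Q_κ ≤ dist(Q_κ, S) ≤ 4 diam Q_κ`) with sup-norm metric projections `x̃_κ` of the
centers, and let `𝓘 = {κ : r_κ ≤ 1}`.  Then for every `c ≥ 1`,
`Σ_{κ ∈ 𝓘} L_n(Q(x̃_κ, r_κ)) · m(Q(x̃_κ, c)) ≤ C(c,n) · m(S)`,
where the constant `C` depends only on `c` and `n`. -/
theorem statement19 (n : ℕ) (c : ℝ) (hc : 1 ≤ c) :
    ∃ C : ℝ, 0 < C ∧
      ∀ (S : Set (Fin n → ℝ)), IsClosed S → S.Nonempty →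
      ∀ (m : Measure (Fin n → ℝ)), IsFiniteMeasure m → m Sᶜ = 0 →
      ∀ (ι : Type) [Countable ι], ∀ (x : ι → (Fin n → ℝ)) (r : ι → ℝ),
        (∀ κ, 0 < r κ) →
        (∀ κ, closedBall (x κ) (r κ) ⊆ Sᶜ) →
        (Pairwise fun κ κ' => Disjoint (ball (x κ) (r κ)) (ball (x κ') (r κ'))) →
        (∀ κ, ∀ a ∈ closedBall (x κ) (r κ), 2 * r κ ≤ Metric.infDist a S) →
        (∀ κ, ∃ a ∈ closedBall (x κ) (r κ), Metric.infDist a S ≤ 8 * r κ) →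
        ∀ x' : ι → (Fin n → ℝ),
          (∀ κ, x' κ ∈ S ∧ dist (x κ) (x' κ) = Metric.infDist (x κ) S) →
          ∑' κ : {κ : ι // r κ ≤ 1},
              volume (closedBall (x' κ.1) (r κ.1)) * m (closedBall (x' κ.1) c)
            ≤ ENNReal.ofReal C * m S := by
  refine ⟨(2 * (c + 10)) ^ n, by positivity, ?_⟩
  intro S hS hSne m hFin hm ι _ x r hr hsub hdisj hlow hup x' hx'
  classical
  set K : ℝ≥0∞ := ENNReal.ofReal ((2 * (c + 10)) ^ n) with hK
  -- distance from x κ to its projection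
  have hproj : ∀ κ, dist (x κ) (x' κ) ≤ 9 * r κ := by
    intro κ
    obtain ⟨a, ha, hainf⟩ := hup κ
    have h1 : Metric.infDist (x κ) S ≤ Metric.infDist a S + dist (x κ) a :=
      Metric.infDist_le_infDist_add_dist
    have h2 : dist (x κ) a ≤ r κ := by
      rw [dist_comm]; exact mem_closedBall.mp ha
    calc dist (x κ) (x' κ) = Metric.infDist (x κ) S := (hx' κ).2
      _ ≤ 8 * r κ + r κ := by linarith
      _ = 9 * r κ := by ring
  -- rewrite each term as an integral of an indicator
  have hterm : ∀ κ : {κ : ι // r κ ≤ 1},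
      volume (closedBall (x' κ.1) (r κ.1)) * m (closedBall (x' κ.1) c)
        = ∫⁻ y, (closedBall (x' κ.1) c).indicator
            (fun _ => volume (closedBall (x' κ.1) (r κ.1))) y ∂m := by
    intro κ
    rw [lintegral_indicator_const measurableSet_closedBall]
  rw [tsum_congr hterm,
    ← lintegral_tsum (fun κ =>
      (measurable_const.indicator measurableSet_closedBall).aemeasurable)]
  -- pointwise bound on S
  have hpt : ∀ y ∈ S, (∑' κ : {κ : ι // r κ ≤ 1},
      (closedBall (x' κ.1) c).indicator
        (fun _ => volume (closedBall (x' κ.1) (r κ.1))) y) ≤ K := by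
    intro y hy
    set B : {κ : ι // r κ ≤ 1} → Set (Fin n → ℝ) :=
      fun κ => if y ∈ closedBall (x' κ.1) c then ball (x κ.1) (r κ.1) else ∅ with hB
    have hBeq : ∀ κ : {κ : ι // r κ ≤ 1},
        (closedBall (x' κ.1) c).indicator
          (fun _ => volume (closedBall (x' κ.1) (r κ.1))) y = volume (B κ) := by
      intro κ
      by_cases h : y ∈ closedBall (x' κ.1) c
      · simp only [hB, if_pos h, indicator_of_mem h]
        rw [Real.volume_pi_closedBall _ (hr κ.1).le, Real.volume_pi_ball _ (hr κ.1)]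
      · rw [indicator_of_notMem h]
        simp only [hB]
        rw [if_neg h, measure_empty]
    have hBdisj : Pairwise (Function.onFun Disjoint B) := by
      intro κ κ' hne
      simp only [hB, Function.onFun]
      split_ifs with h1 h2 h2
      · exact hdisj (Subtype.coe_ne_coe.mpr hne)
      all_goals simp
    have hBmeas : ∀ κ, MeasurableSet (B κ) := by
      intro κ
      simp only [hB]
      split_ifs
      · exact measurableSet_ball
      · exact MeasurableSet.empty
    have hBsub : (⋃ κ, B κ) ⊆ closedBall y (c + 10) := by
      intro z hz
      obtain ⟨κ, hzκ⟩ := mem_iUnion.mp hz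
      simp only [hB] at hzκ
      by_cases h : y ∈ closedBall (x' κ.1) c
      · rw [if_pos h] at hzκ
        have h1 : dist z (x κ.1) < r κ.1 := mem_ball.mp hzκ
        have h2 : dist (x' κ.1) y ≤ c := by rw [dist_comm]; exact mem_closedBall.mp h
        have h3 : dist (x κ.1) (x' κ.1) ≤ 9 * r κ.1 := hproj κ.1
        have h4 : dist z y ≤ dist z (x κ.1) + dist (x κ.1) (x' κ.1) + dist (x' κ.1) y :=
          dist_triangle4 z (x κ.1) (x' κ.1) y
        have hr1 : r κ.1 ≤ 1 := κ.2
        rw [mem_closedBall]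
        linarith
      · rw [if_neg h] at hzκ; exact absurd hzκ (notMem_empty z)
    calc (∑' κ : {κ : ι // r κ ≤ 1},
          (closedBall (x' κ.1) c).indicator
            (fun _ => volume (closedBall (x' κ.1) (r κ.1))) y)
        = ∑' κ, volume (B κ) := tsum_congr hBeq
      _ = volume (⋃ κ, B κ) := (measure_iUnion hBdisj hBmeas).symm
      _ ≤ volume (closedBall y (c + 10)) := measure_mono hBsub
      _ = K := by
          rw [Real.volume_pi_closedBall _ (by linarith : (0:ℝ) ≤ c + 10),
            Fintype.card_fin]
  have hmuniv : m univ = m S := by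
    rw [← measure_add_measure_compl hS.measurableSet, hm, add_zero]
  calc ∫⁻ y, (∑' κ : {κ : ι // r κ ≤ 1},
        (closedBall (x' κ.1) c).indicator
          (fun _ => volume (closedBall (x' κ.1) (r κ.1))) y) ∂m
      ≤ ∫⁻ _, K ∂m := by
        refine lintegral_mono_ae ?_
        have : ∀ᵐ y ∂m, y ∈ S := by
          rw [ae_iff]
          exact hm
        filter_upwards [this] with y hy using hpt y hy
    _ = K * m univ := lintegral_const K
    _ = ENNReal.ofReal ((2 * (c + 10)) ^ n) * m S := by rw [hmuniv]
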